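/- Let α : R → [0,∞) be a finitely additive set function on a ring of sets R and let β : R → ℂ be a bounded finitely additive set function that is absolutely continuous with respect to α. Then there exist, for each n ∈ ℕ, a natural number k_n, complex numbers c_{n,1},…,c_{n,k_n}, and sets E_{n,1},…,E_{n,k_n} ∈ R such that for every E ∈ R one has β(E) = lim_{n→∞} Σ_{i=1}^{k_n} c_{n,i} α(E ∩ E_{n,i}) (that is, β(E) = lim_{n→∞} ∫_E φ_n dα for the R-simple functions φ_n = Σ_i c_{n,i} χ_{E_{n,i}}). -/

import Mathlib

open Filter Topology

/-- The total variation `|β|(E)` of a complex-valued set function `β` on a ring of sets `R`: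
the supremum of `∑ i, |β (E i)|` over all finite families of pairwise disjoint members of `R`
contained in `E`. -/
noncomputable def totalVariation {T : Type*} (R : Set (Set T)) (β : Set T → ℂ)
    (E : Set T) : ℝ :=
  sSup {x : ℝ | ∃ (k : ℕ) (Es : Fin k → Set T),
    (∀ i, Es i ∈ R) ∧ Pairwise (Function.onFun Disjoint Es) ∧ (∀ i, Es i ⊆ E) ∧
    x = ∑ i, ‖β (Es i)‖}

section Aux
variable {T : Type*} {R : Set (Set T)}

lemma ring_empty (hne : R.Nonempty) (hdiff : ∀ E ∈ R, ∀ F ∈ R, E \ F ∈ R) : ∅ ∈ R := by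
  obtain ⟨E, hE⟩ := hne
  simpa using hdiff E hE E hE

lemma ring_inter (hdiff : ∀ E ∈ R, ∀ F ∈ R, E \ F ∈ R)
    {E F : Set T} (hE : E ∈ R) (hF : F ∈ R) : E ∩ F ∈ R := by
  have h : E ∩ F = E \ (E \ F) := by ext x; simp
  rw [h]; exact hdiff E hE _ (hdiff E hE F hF)

variable {M : Type*} [AddCommGroup M]

lemma add_empty (hne : R.Nonempty) (hdiff : ∀ E ∈ R, ∀ F ∈ R, E \ F ∈ R)
    (μ : Set T → M) (hμ : ∀ E ∈ R, ∀ F ∈ R, Disjoint E F → μ (E ∪ F) = μ E + μ F) :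
    μ ∅ = 0 := by
  have h0 : (∅ : Set T) ∈ R := ring_empty hne hdiff
  have h := hμ ∅ h0 ∅ h0 (by simp)
  simp only [Set.union_empty] at h
  have : μ ∅ + 0 = μ ∅ + μ ∅ := by rw [add_zero]; exact h
  exact (add_left_cancel this).symm

/-- splitting along a subset -/
lemma add_split (hdiff : ∀ E ∈ R, ∀ F ∈ R, E \ F ∈ R)
    (μ : Set T → M) (hμ : ∀ E ∈ R, ∀ F ∈ R, Disjoint E F → μ (E ∪ F) = μ E + μ F)
    {E F : Set T} (hE : E ∈ R) (hF : F ∈ R) :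
    μ E = μ (E \ F) + μ (E ∩ F) := by
  have h1 : E \ F ∈ R := hdiff E hE F hF
  have h2 : E ∩ F ∈ R := ring_inter hdiff hE hF
  have hd : Disjoint (E \ F) (E ∩ F) := by
    rw [Set.disjoint_left]; rintro x ⟨-, hx⟩ ⟨-, hx'⟩; exact hx hx'
  have hu : (E \ F) ∪ (E ∩ F) = E := by ext x; simp [or_and_left, em]
  rw [← hμ _ h1 _ h2 hd, hu]

lemma mem_finset_union (hne : R.Nonempty) (hunion : ∀ E ∈ R, ∀ F ∈ R, E ∪ F ∈ R)
    (hdiff : ∀ E ∈ R, ∀ F ∈ R, E \ F ∈ R)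
    {ι : Type*} (s : Finset ι) (Es : ι → Set T) (h : ∀ i ∈ s, Es i ∈ R) :
    (⋃ i ∈ s, Es i) ∈ R := by
  classical
  induction s using Finset.induction_on with
  | empty => simpa using ring_empty hne hdiff
  | insert a s ha ih =>
      rw [Finset.set_biUnion_insert]
      exact hunion _ (h a (s.mem_insert_self a)) _
        (ih fun i hi => h i (Finset.mem_insert_of_mem hi))

lemma add_finset_union (hne : R.Nonempty) (hunion : ∀ E ∈ R, ∀ F ∈ R, E ∪ F ∈ R)
    (hdiff : ∀ E ∈ R, ∀ F ∈ R, E \ F ∈ R)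
    (μ : Set T → M) (hμ : ∀ E ∈ R, ∀ F ∈ R, Disjoint E F → μ (E ∪ F) = μ E + μ F)
    (hμ0 : μ ∅ = 0)
    {ι : Type*} (s : Finset ι) (Es : ι → Set T) (h : ∀ i ∈ s, Es i ∈ R)
    (hdisj : ∀ i ∈ s, ∀ j ∈ s, i ≠ j → Disjoint (Es i) (Es j)) :
    μ (⋃ i ∈ s, Es i) = ∑ i ∈ s, μ (Es i) := by
  classical
  induction s using Finset.induction_on with
  | empty => simpa using hμ0
  | insert a s ha ih =>
      rw [Finset.set_biUnion_insert, Finset.sum_insert ha]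
      have hmem : (⋃ i ∈ s, Es i) ∈ R :=
        mem_finset_union hne hunion hdiff s Es (fun i hi => h i (Finset.mem_insert_of_mem hi))
      have hd : Disjoint (Es a) (⋃ i ∈ s, Es i) := by
        rw [Set.disjoint_iUnion₂_right]
        intro i hi
        exact hdisj a (s.mem_insert_self a) i (Finset.mem_insert_of_mem hi)
          (fun he => ha (he ▸ hi))
      rw [hμ _ (h a (s.mem_insert_self a)) _ hmem hd,
        ih (fun i hi => h i (Finset.mem_insert_of_mem hi))
          (fun i hi j hj hij => hdisj i (Finset.mem_insert_of_mem hi) j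
            (Finset.mem_insert_of_mem hj) hij)]
lemma real_var_bound (hne : R.Nonempty) (hunion : ∀ E ∈ R, ∀ F ∈ R, E ∪ F ∈ R)
    (hdiff : ∀ E ∈ R, ∀ F ∈ R, E \ F ∈ R)
    (γ : Set T → ℝ) (hγ : ∀ E ∈ R, ∀ F ∈ R, Disjoint E F → γ (E ∪ F) = γ E + γ F)
    (M : ℝ) (hM : ∀ E ∈ R, |γ E| ≤ M)
    (k : ℕ) (Es : Fin k → Set T) (h : ∀ i, Es i ∈ R)
    (hdisj : Pairwise (Function.onFun Disjoint Es)) :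
    ∑ i, |γ (Es i)| ≤ 2 * M := by
  classical
  have hγ0 : γ ∅ = 0 := add_empty hne hdiff γ hγ
  have key : ∀ s : Finset (Fin k), ∑ i ∈ s, γ (Es i) ≤ M := by
    intro s
    rw [← add_finset_union hne hunion hdiff γ hγ hγ0 s Es (fun i _ => h i)
      (fun i _ j _ hij => hdisj hij)]
    exact le_trans (le_abs_self _)
      (hM _ (mem_finset_union hne hunion hdiff s Es (fun i _ => h i)))
  have key' : ∀ s : Finset (Fin k), -(∑ i ∈ s, γ (Es i)) ≤ M := by
    intro s
    rw [← add_finset_union hne hunion hdiff γ hγ hγ0 s Es (fun i _ => h i)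
      (fun i _ j _ hij => hdisj hij)]
    exact le_trans (neg_le_abs _)
      (hM _ (mem_finset_union hne hunion hdiff s Es (fun i _ => h i)))
  set s := Finset.univ.filter (fun i => 0 ≤ γ (Es i)) with hs
  have : ∑ i, |γ (Es i)| = ∑ i ∈ s, γ (Es i) + -(∑ i ∈ sᶜ, γ (Es i)) := by
    rw [← Finset.sum_neg_distrib, ← Finset.sum_filter_add_sum_filter_not Finset.univ
      (fun i => 0 ≤ γ (Es i)) (fun i => |γ (Es i)|)]
    congr 1
    · exact Finset.sum_congr rfl fun i hi => abs_of_nonneg (Finset.mem_filter.mp hi).2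
    · rw [show sᶜ = Finset.univ.filter (fun i => ¬ 0 ≤ γ (Es i)) by
        simp [hs, Finset.compl_filter]]
      exact Finset.sum_congr rfl fun i hi =>
        abs_of_neg (lt_of_not_ge (Finset.mem_filter.mp hi).2)
  rw [this]
  linarith [key s, key' sᶜ]
lemma sum_norm_le (hne : R.Nonempty) (hunion : ∀ E ∈ R, ∀ F ∈ R, E ∪ F ∈ R)
    (hdiff : ∀ E ∈ R, ∀ F ∈ R, E \ F ∈ R)
    (β : Set T → ℂ) (hβadd : ∀ E ∈ R, ∀ F ∈ R, Disjoint E F → β (E ∪ F) = β E + β F)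
    (M : ℝ) (hβM : ∀ E ∈ R, ‖β E‖ ≤ M)
    (k : ℕ) (Es : Fin k → Set T) (h : ∀ i, Es i ∈ R)
    (hdisj : Pairwise (Function.onFun Disjoint Es)) :
    ∑ i, ‖β (Es i)‖ ≤ 4 * M := by
  have h1 : ∑ i, |(β (Es i)).re| ≤ 2 * M :=
    real_var_bound hne hunion hdiff (fun E => (β E).re)
      (fun E hE F hF hd => by beta_reduce; rw [hβadd E hE F hF hd]; simp)
      M (fun E hE => le_trans (Complex.abs_re_le_norm _) (hβM E hE)) k Es h hdisj
  have h2 : ∑ i, |(β (Es i)).im| ≤ 2 * M :=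
    real_var_bound hne hunion hdiff (fun E => (β E).im)
      (fun E hE F hF hd => by beta_reduce; rw [hβadd E hE F hF hd]; simp)
      M (fun E hE => le_trans (Complex.abs_im_le_norm _) (hβM E hE)) k Es h hdisj
  calc ∑ i, ‖β (Es i)‖ ≤ ∑ i, (|(β (Es i)).re| + |(β (Es i)).im|) :=
        Finset.sum_le_sum fun i _ => Complex.norm_le_abs_re_add_abs_im _
    _ = ∑ i, |(β (Es i)).re| + ∑ i, |(β (Es i)).im| := Finset.sum_add_distrib
    _ ≤ 2 * M + 2 * M := add_le_add h1 h2
    _ = 4 * M := by ring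

lemma tv_bddAbove (hne : R.Nonempty) (hunion : ∀ E ∈ R, ∀ F ∈ R, E ∪ F ∈ R)
    (hdiff : ∀ E ∈ R, ∀ F ∈ R, E \ F ∈ R)
    (β : Set T → ℂ) (hβadd : ∀ E ∈ R, ∀ F ∈ R, Disjoint E F → β (E ∪ F) = β E + β F)
    (M : ℝ) (hβM : ∀ E ∈ R, ‖β E‖ ≤ M) (E : Set T) :
    ∀ x ∈ {x : ℝ | ∃ (k : ℕ) (Es : Fin k → Set T),
      (∀ i, Es i ∈ R) ∧ Pairwise (Function.onFun Disjoint Es) ∧ (∀ i, Es i ⊆ E) ∧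
      x = ∑ i, ‖β (Es i)‖}, x ≤ 4 * M := by
  rintro x ⟨k, Es, h1, h2, h3, rfl⟩
  exact sum_norm_le hne hunion hdiff β hβadd M hβM k Es h1 h2

lemma norm_le_tv (hne : R.Nonempty) (hunion : ∀ E ∈ R, ∀ F ∈ R, E ∪ F ∈ R)
    (hdiff : ∀ E ∈ R, ∀ F ∈ R, E \ F ∈ R)
    (β : Set T → ℂ) (hβadd : ∀ E ∈ R, ∀ F ∈ R, Disjoint E F → β (E ∪ F) = β E + β F)
    (M : ℝ) (hβM : ∀ E ∈ R, ‖β E‖ ≤ M) {E : Set T} (hE : E ∈ R) :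
    ‖β E‖ ≤ totalVariation R β E := by
  apply le_csSup ⟨4 * M, tv_bddAbove hne hunion hdiff β hβadd M hβM E⟩
  exact ⟨1, fun _ => E, fun _ => hE, Subsingleton.pairwise, fun _ => subset_rfl, by simp⟩

lemma chain_decomp (hdiff : ∀ E ∈ R, ∀ F ∈ R, E \ F ∈ R)
    (μ : Set T → M) (hμ : ∀ E ∈ R, ∀ F ∈ R, Disjoint E F → μ (E ∪ F) = μ E + μ F)
    (C : ℕ → Set T) (hC : ∀ j, C j ∈ R) (hanti : ∀ j, C (j+1) ⊆ C j)
    {E : Set T} (hE : E ∈ R) (m : ℕ) :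
    μ E = μ (E \ C 0) + ∑ j ∈ Finset.range m, μ ((E ∩ C j) \ C (j+1)) + μ (E ∩ C m) := by
  induction m with
  | zero => simpa using add_split hdiff μ hμ hE (hC 0)
  | succ m ih =>
      rw [Finset.sum_range_succ, ih]
      have h1 : E ∩ C m ∈ R := ring_inter hdiff hE (hC m)
      have h2 : μ (E ∩ C m) = μ ((E ∩ C m) \ C (m+1)) + μ ((E ∩ C m) ∩ C (m+1)) :=
        add_split hdiff μ hμ h1 (hC (m+1))
      have h3 : (E ∩ C m) ∩ C (m+1) = E ∩ C (m+1) := by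
        ext x; simp only [Set.mem_inter_iff]
        exact ⟨fun ⟨⟨a, _⟩, b⟩ => ⟨a, b⟩, fun ⟨a, b⟩ => ⟨⟨a, hanti m b⟩, b⟩⟩
      rw [h3] at h2
      rw [h2]; abel
lemma alpha_mono (hdiff : ∀ E ∈ R, ∀ F ∈ R, E \ F ∈ R)
    (α : Set T → ℝ) (hα0 : ∀ E ∈ R, 0 ≤ α E)
    (hαadd : ∀ E ∈ R, ∀ F ∈ R, Disjoint E F → α (E ∪ F) = α E + α F)
    {E F : Set T} (hE : E ∈ R) (hF : F ∈ R) (hEF : E ⊆ F) : α E ≤ α F := by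
  have h := add_split hdiff α hαadd hF hE
  rw [Set.inter_eq_self_of_subset_right hEF] at h
  have := hα0 (F \ E) (hdiff F hF E hE)
  linarith

set_option maxHeartbeats 1600000 in
lemma real_approx (hne : R.Nonempty) (hunion : ∀ E ∈ R, ∀ F ∈ R, E ∪ F ∈ R)
    (hdiff : ∀ E ∈ R, ∀ F ∈ R, E \ F ∈ R)
    (α : Set T → ℝ) (hα0 : ∀ E ∈ R, 0 ≤ α E)
    (hαadd : ∀ E ∈ R, ∀ F ∈ R, Disjoint E F → α (E ∪ F) = α E + α F)
    (γ : Set T → ℝ) (hγadd : ∀ E ∈ R, ∀ F ∈ R, Disjoint E F → γ (E ∪ F) = γ E + γ F)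
    (M : ℝ) (hγM : ∀ E ∈ R, |γ E| ≤ M)
    (hacγ : ∀ ε : ℝ, 0 < ε → ∃ δ : ℝ, 0 < δ ∧ ∀ S ∈ R, α S < δ → |γ S| < ε)
    {F : Set T} (hF : F ∈ R) (ε : ℝ) (hε : 0 < ε) :
    ∃ (k : ℕ) (c : Fin k → ℝ) (Es : Fin k → Set T),
      (∀ i, Es i ∈ R ∧ Es i ⊆ F) ∧
      ∀ E ∈ R, E ⊆ F → |γ E - ∑ i, c i * α (E ∩ Es i)| ≤ ε := by
  classical
  have hempty : (∅ : Set T) ∈ R := ring_empty hne hdiff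
  have hM0 : 0 ≤ M := le_trans (abs_nonneg _) (hγM ∅ hempty)
  obtain ⟨δ, hδ, hδprop⟩ := hacγ (ε/4) (by positivity)
  set A := α F with hA_def
  have hA : 0 ≤ A := hα0 F hF
  set ε₁ := ε / (4*(A+1)) with hε₁_def
  have hε₁ : 0 < ε₁ := by positivity
  obtain ⟨N, hN⟩ := exists_nat_gt ((M+1)/(ε₁*δ))
  have hNpos : (0:ℝ) < N := lt_trans (by positivity) hN
  have hNkey : M + 1 < (N:ℝ) * ε₁ * δ := by
    rw [div_lt_iff₀ (by positivity)] at hN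
    nlinarith
  set K := (2*(N:ℝ)*(2*(N:ℝ)+2)) with hK_def
  have hK : 0 ≤ K := by positivity
  set σ := min 1 (ε / (4*(K+1))) with hσ_def
  have hσ : 0 < σ := lt_min one_pos (by positivity)
  have hσ1 : σ ≤ 1 := min_le_left _ _
  have hσ2 : K * σ ≤ ε / 4 := by
    have h1 : σ ≤ ε / (4*(K+1)) := min_le_right _ _
    have h2 : K * σ ≤ K * (ε / (4*(K+1))) := mul_le_mul_of_nonneg_left h1 hK
    have h3 : K * (ε / (4*(K+1))) ≤ ε / 4 := by
      rw [mul_div_assoc', div_le_div_iff₀ (by positivity) (by norm_num)]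
      nlinarith
    linarith
  -- the level function
  set r : ℕ → ℝ := fun j => ((j : ℝ) - N) * ε₁ with hr_def
  have hr_mono : ∀ j, r j ≤ r (j+1) := by
    intro j; apply mul_le_mul_of_nonneg_right _ (le_of_lt hε₁)
    push_cast; linarith
  -- approximate Hahn decompositions
  have hP : ∀ j : ℕ, ∃ P, P ∈ R ∧ P ⊆ F ∧
      (∀ E ∈ R, E ⊆ P → r j * α E - σ ≤ γ E) ∧
      (∀ E ∈ R, E ⊆ F → Disjoint E P → γ E ≤ r j * α E + σ) := by
    intro j
    set g : Set T → ℝ := fun E => γ E - r j * α E with hg_def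
    set S : Set ℝ := {x | ∃ E, E ∈ R ∧ E ⊆ F ∧ x = g E} with hS_def
    have hSne : S.Nonempty := ⟨g ∅, ∅, hempty, Set.empty_subset F, rfl⟩
    have hSbdd : BddAbove S := by
      refine ⟨M + |r j| * A, ?_⟩
      rintro x ⟨E, hE, hEF, rfl⟩
      have h1 : γ E ≤ M := le_trans (le_abs_self _) (hγM E hE)
      have h2 : α E ≤ A := alpha_mono hdiff α hα0 hαadd hE hF hEF
      have h3 : 0 ≤ α E := hα0 E hE
      have h4 : - (r j * α E) ≤ |r j| * A := by
        calc -(r j * α E) ≤ |r j * α E| := neg_le_abs _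
          _ = |r j| * α E := by rw [abs_mul, abs_of_nonneg h3]
          _ ≤ |r j| * A := mul_le_mul_of_nonneg_left h2 (abs_nonneg _)
      simp only [hg_def]; linarith
    obtain ⟨x, ⟨P, hPR, hPF, rfl⟩, hx⟩ :=
      exists_lt_of_lt_csSup hSne (show sSup S - σ < sSup S by linarith)
    refine ⟨P, hPR, hPF, ?_, ?_⟩
    · intro E hE hEP
      have hgle : g (P \ E) ≤ sSup S :=
        le_csSup hSbdd ⟨P \ E, hdiff P hPR E hE, subset_trans Set.diff_subset hPF, rfl⟩
      have hγsplit := add_split hdiff γ hγadd hPR hE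
      have hαsplit := add_split hdiff α hαadd hPR hE
      rw [Set.inter_eq_self_of_subset_right hEP] at hγsplit hαsplit
      simp only [hg_def] at hgle hx ⊢
      have hα' : r j * α P = r j * α (P \ E) + r j * α E := by rw [hαsplit]; ring
      linarith [hx, hgle, hγsplit]
    · intro E hE hEF hEP
      have hmem : E ∪ P ∈ R := hunion E hE P hPR
      have hgle : g (E ∪ P) ≤ sSup S :=
        le_csSup hSbdd ⟨E ∪ P, hmem, Set.union_subset hEF hPF, rfl⟩
      have hγu := hγadd E hE P hPR hEP
      have hαu := hαadd E hE P hPR hEP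
      simp only [hg_def] at hgle hx ⊢
      rw [hγu, hαu] at hgle
      have hα' : r j * (α E + α P) = r j * α E + r j * α P := by ring
      linarith [hx, hgle, hα']
  choose P hPR hPF hPlow hPup using hP
  -- the decreasing chain
  set C : ℕ → Set T := fun j => Nat.rec (P 0) (fun n Cn => Cn ∩ P (n+1)) j with hC_def
  have hC0 : C 0 = P 0 := rfl
  have hCsucc : ∀ j, C (j+1) = C j ∩ P (j+1) := fun j => rfl
  have hCR : ∀ j, C j ∈ R := by
    intro j; induction j with
    | zero => exact hPR 0
    | succ n ih => rw [hCsucc]; exact ring_inter hdiff ih (hPR (n+1))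
  have hCF : ∀ j, C j ⊆ F := by
    intro j; induction j with
    | zero => exact hPF 0
    | succ n ih => rw [hCsucc]; exact subset_trans Set.inter_subset_left ih
  have hCP : ∀ j, C j ⊆ P j := by
    intro j; cases j with
    | zero => exact subset_rfl
    | succ n => rw [hCsucc]; exact Set.inter_subset_right
  have hanti : ∀ j, C (j+1) ⊆ C j := by
    intro j; rw [hCsucc]; exact Set.inter_subset_left
  -- lower and upper estimates
  have hlow : ∀ j, ∀ E ∈ R, E ⊆ C j → r j * α E - σ ≤ γ E :=
    fun j E hE hEC => hPlow j E hE (subset_trans hEC (hCP j))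
  have hup : ∀ j, ∀ E ∈ R, E ⊆ F → Disjoint E (C j) →
      γ E ≤ r j * α E + ((j:ℝ)+1) * σ := by
    intro j
    induction j with
    | zero =>
        intro E hE hEF hd
        have := hPup 0 E hE hEF (hC0 ▸ hd)
        push_cast; linarith
    | succ n ih =>
        intro E hE hEF hd
        set E₁ := E ∩ C n with hE₁_def
        set E₂ := E \ C n with hE₂_def
        have hE₁R : E₁ ∈ R := ring_inter hdiff hE (hCR n)
        have hE₂R : E₂ ∈ R := hdiff E hE (C n) (hCR n)
        have hE₂d : Disjoint E₂ (C n) := Set.disjoint_sdiff_left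
        have h2 : γ E₂ ≤ r n * α E₂ + ((n:ℝ)+1) * σ :=
          ih E₂ hE₂R (subset_trans Set.diff_subset hEF) hE₂d
        have hE₁d : Disjoint E₁ (P (n+1)) := by
          rw [Set.disjoint_left]
          intro x hx hxP
          exact Set.disjoint_left.mp hd hx.1 (by rw [hCsucc]; exact ⟨hx.2, hxP⟩)
        have h1 : γ E₁ ≤ r (n+1) * α E₁ + σ :=
          hPup (n+1) E₁ hE₁R (subset_trans Set.inter_subset_left hEF) hE₁d
        have hγsplit := add_split hdiff γ hγadd hE (hCR n)
        have hαsplit := add_split hdiff α hαadd hE (hCR n)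
        have h2' : γ E₂ ≤ r (n+1) * α E₂ + ((n:ℝ)+1) * σ := by
          have := mul_le_mul_of_nonneg_right (hr_mono n) (hα0 E₂ hE₂R)
          linarith
        push_cast
        rw [hγsplit, hαsplit]
        push_cast at h1 h2'
        nlinarith [h1, h2']
  -- tail bounds
  have hNε₁ : 0 < (N:ℝ) * ε₁ := by positivity
  have htail : α (F \ C 0) < δ := by
    have hmem : F \ C 0 ∈ R := hdiff F hF (C 0) (hCR 0)
    have hd : Disjoint (F \ C 0) (C 0) := Set.disjoint_sdiff_left
    have h1 := hup 0 (F \ C 0) hmem Set.diff_subset hd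
    have h2 : -M ≤ γ (F \ C 0) := by
      have := hγM _ hmem; rw [abs_le] at this; linarith [this.1]
    have hr0 : r 0 = -((N:ℝ) * ε₁) := by simp [hr_def]
    rw [hr0] at h1
    have h3 : (N:ℝ) * ε₁ * α (F \ C 0) ≤ M + σ := by push_cast at h1; nlinarith
    by_contra hcon
    push_neg at hcon
    have : (N:ℝ) * ε₁ * δ ≤ (N:ℝ) * ε₁ * α (F \ C 0) :=
      mul_le_mul_of_nonneg_left hcon (le_of_lt hNε₁)
    linarith
  have htop : α (C (2*N)) < δ := by
    have h1 := hlow (2*N) (C (2*N)) (hCR (2*N)) subset_rfl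
    have h2 : γ (C (2*N)) ≤ M := le_trans (le_abs_self _) (hγM _ (hCR (2*N)))
    have hr2N : r (2*N) = (N:ℝ) * ε₁ := by
      simp only [hr_def]; push_cast; ring
    rw [hr2N] at h1
    have h3 : (N:ℝ) * ε₁ * α (C (2*N)) ≤ M + σ := by linarith
    by_contra hcon
    push_neg at hcon
    have : (N:ℝ) * ε₁ * δ ≤ (N:ℝ) * ε₁ * α (C (2*N)) :=
      mul_le_mul_of_nonneg_left hcon (le_of_lt hNε₁)
    linarith
  -- assemble the simple function
  refine ⟨2*N, fun j => r j, fun j => C (j:ℕ) \ C ((j:ℕ)+1), fun i => ⟨hdiff (C (i:ℕ)) (hCR (i:ℕ)) (C ((i:ℕ)+1)) (hCR ((i:ℕ)+1)),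
    fun x hx => hCF (i:ℕ) hx.1⟩, ?_⟩
  intro E hE hEF
  set D : ℕ → Set T := fun j => (E ∩ C j) \ C (j+1) with hD_def
  have hDR : ∀ j, D j ∈ R := fun j => hdiff _ (ring_inter hdiff hE (hCR j)) _ (hCR (j+1))
  have hED : ∀ j : Fin (2*N), E ∩ (C (j:ℕ) \ C ((j:ℕ)+1)) = D (j:ℕ) := by
    intro j; simp only [hD_def]; ext x
    simp only [Set.mem_inter_iff, Set.mem_diff]
    tauto
  have hsum_eq : ∑ i : Fin (2*N), r (i:ℕ) * α (E ∩ (C (i:ℕ) \ C ((i:ℕ)+1)))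
      = ∑ j ∈ Finset.range (2*N), r j * α (D j) := by
    rw [Fin.sum_univ_eq_sum_range (fun i => r i * α (E ∩ (C i \ C (i+1))))]
    exact Finset.sum_congr rfl fun j hj => by
      congr 1
      have : E ∩ (C j \ C (j+1)) = D j := by
        simp only [hD_def]; ext x; simp only [Set.mem_inter_iff, Set.mem_diff]; tauto
      rw [this]
  rw [hsum_eq]
  have hdecγ := chain_decomp hdiff γ hγadd C hCR hanti hE (2*N)
  have hdecα := chain_decomp hdiff α hαadd C hCR hanti hE (2*N)
  -- tail estimates for E
  have htailE : |γ (E \ C 0)| < ε/4 := by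
    apply hδprop _ (hdiff E hE _ (hCR 0))
    calc α (E \ C 0) ≤ α (F \ C 0) :=
          alpha_mono hdiff α hα0 hαadd (hdiff E hE _ (hCR 0)) (hdiff F hF _ (hCR 0))
            (Set.diff_subset_diff_left hEF)
      _ < δ := htail
  have htopE : |γ (E ∩ C (2*N))| < ε/4 := by
    apply hδprop _ (ring_inter hdiff hE (hCR (2*N)))
    calc α (E ∩ C (2*N)) ≤ α (C (2*N)) :=
          alpha_mono hdiff α hα0 hαadd (ring_inter hdiff hE (hCR (2*N))) (hCR (2*N))
            Set.inter_subset_right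
      _ < δ := htop
  -- middle estimates
  have hmid : ∀ j ∈ Finset.range (2*N),
      |γ (D j) - r j * α (D j)| ≤ ε₁ * α (D j) + (2*(N:ℝ)+2) * σ := by
    intro j hj
    rw [Finset.mem_range] at hj
    have hDC : D j ⊆ C j := fun x hx => hx.1.2
    have hDF : D j ⊆ F := subset_trans hDC (hCF j)
    have hDd : Disjoint (D j) (C (j+1)) := Set.disjoint_sdiff_left
    have hαD : 0 ≤ α (D j) := hα0 _ (hDR j)
    have hlo := hlow j (D j) (hDR j) hDC
    have hhi := hup (j+1) (D j) (hDR j) hDF hDd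
    have hrj : r (j+1) = r j + ε₁ := by simp only [hr_def]; push_cast; ring
    rw [hrj] at hhi
    have hjN : (j:ℝ) + 2 ≤ 2*(N:ℝ) + 2 := by
      have : (j:ℝ) ≤ 2*(N:ℝ) := by exact_mod_cast le_of_lt hj
      linarith
    have h1 : ((j:ℝ)+1+1) * σ ≤ (2*(N:ℝ)+2) * σ := by
      apply mul_le_mul_of_nonneg_right _ (le_of_lt hσ); push_cast at hjN ⊢; linarith
    have hexp : (r j + ε₁) * α (D j) = r j * α (D j) + ε₁ * α (D j) := by ring
    have hσle : σ ≤ (2*(N:ℝ)+2) * σ := by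
      have h2' := mul_le_mul_of_nonneg_right
        (show (1:ℝ) ≤ 2*(N:ℝ)+2 by linarith) (le_of_lt hσ)
      linarith
    rw [abs_le]
    constructor
    · linarith [hlo, hσle, mul_nonneg (le_of_lt hε₁) hαD]
    · push_cast at hhi; linarith [hhi, h1, hexp]
  -- sum up
  have hsumbound : ∑ j ∈ Finset.range (2*N), |γ (D j) - r j * α (D j)|
      ≤ ε₁ * (∑ j ∈ Finset.range (2*N), α (D j)) + K * σ := by
    calc ∑ j ∈ Finset.range (2*N), |γ (D j) - r j * α (D j)|
        ≤ ∑ j ∈ Finset.range (2*N), (ε₁ * α (D j) + (2*(N:ℝ)+2) * σ) :=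
          Finset.sum_le_sum hmid
      _ = ε₁ * (∑ j ∈ Finset.range (2*N), α (D j)) + (2*N:ℝ) * ((2*(N:ℝ)+2) * σ) := by
          rw [Finset.sum_add_distrib, Finset.mul_sum, Finset.sum_const, Finset.card_range]
          push_cast; ring
      _ = ε₁ * (∑ j ∈ Finset.range (2*N), α (D j)) + K * σ := by
          rw [hK_def]; ring_nf
  have hαsum : ∑ j ∈ Finset.range (2*N), α (D j) ≤ A := by
    have h1 : 0 ≤ α (E \ C 0) := hα0 _ (hdiff E hE _ (hCR 0))
    have h2 : 0 ≤ α (E ∩ C (2*N)) := hα0 _ (ring_inter hdiff hE (hCR (2*N)))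
    have h3 : α E ≤ A := alpha_mono hdiff α hα0 hαadd hE hF hEF
    linarith [hdecα]
  have hε₁A : ε₁ * A ≤ ε / 4 := by
    rw [hε₁_def, div_mul_eq_mul_div, div_le_div_iff₀ (by positivity) (by norm_num)]
    nlinarith
  have hαsum0 : 0 ≤ ∑ j ∈ Finset.range (2*N), α (D j) :=
    Finset.sum_nonneg fun j _ => hα0 _ (hDR j)
  have hfinal : γ E - ∑ j ∈ Finset.range (2*N), r j * α (D j)
      = γ (E \ C 0) + γ (E ∩ C (2*N))
        + ∑ j ∈ Finset.range (2*N), (γ (D j) - r j * α (D j)) := by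
    rw [Finset.sum_sub_distrib]
    rw [hdecγ]; ring
  rw [hfinal]
  have habs : |∑ j ∈ Finset.range (2*N), (γ (D j) - r j * α (D j))|
      ≤ ∑ j ∈ Finset.range (2*N), |γ (D j) - r j * α (D j)| :=
    Finset.abs_sum_le_sum_abs _ _
  have hmulA : ε₁ * (∑ j ∈ Finset.range (2*N), α (D j)) ≤ ε₁ * A :=
    mul_le_mul_of_nonneg_left hαsum (le_of_lt hε₁)
  calc |γ (E \ C 0) + γ (E ∩ C (2*N))
        + ∑ j ∈ Finset.range (2*N), (γ (D j) - r j * α (D j))|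
      ≤ |γ (E \ C 0)| + |γ (E ∩ C (2*N))|
        + |∑ j ∈ Finset.range (2*N), (γ (D j) - r j * α (D j))| := by
        apply le_trans (abs_add_le _ _); apply add_le_add_left (abs_add_le _ _)
    _ ≤ ε/4 + ε/4 + (ε₁ * A + K * σ) := by
        apply add_le_add (add_le_add (le_of_lt htailE) (le_of_lt htopE))
        exact le_trans habs (le_trans hsumbound (by linarith))
    _ ≤ ε := by linarith

lemma pairwise_cons_disjoint {n : ℕ} {f : Fin n → Set T}
    (hf : Pairwise (Function.onFun Disjoint f)) (E : Set T) (hE : ∀ i, Disjoint E (f i)) :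
    Pairwise (Function.onFun Disjoint (Fin.cons (α := fun _ => Set T) E f)) := by
  intro i j hij
  induction i using Fin.cases with
  | zero =>
      induction j using Fin.cases with
      | zero => exact absurd rfl hij
      | succ j => simpa [Function.onFun] using hE j
  | succ i =>
      induction j using Fin.cases with
      | zero => simpa [Function.onFun] using (hE i).symm
      | succ j =>
          have : i ≠ j := fun h => hij (by rw [h])
          simpa [Function.onFun] using hf this

set_option maxHeartbeats 800000 in
lemma complex_approx (hne : R.Nonempty) (hunion : ∀ E ∈ R, ∀ F ∈ R, E ∪ F ∈ R)
    (hdiff : ∀ E ∈ R, ∀ F ∈ R, E \ F ∈ R)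
    (α : Set T → ℝ) (β : Set T → ℂ)
    (hα0 : ∀ E ∈ R, 0 ≤ α E)
    (hαadd : ∀ E ∈ R, ∀ F ∈ R, Disjoint E F → α (E ∪ F) = α E + α F)
    (hβadd : ∀ E ∈ R, ∀ F ∈ R, Disjoint E F → β (E ∪ F) = β E + β F)
    (hβbdd : ∃ M : ℝ, ∀ E ∈ R, ‖β E‖ ≤ M)
    (hac : ∀ ε : ℝ, 0 < ε → ∃ δ : ℝ, 0 < δ ∧
      ∀ E ∈ R, α E < δ → totalVariation R β E < ε)
    (ε : ℝ) (hε : 0 < ε) :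
    ∃ (k : ℕ) (c : Fin k → ℂ) (Es : Fin k → Set T),
      (∀ i, Es i ∈ R) ∧
      ∀ E ∈ R, ‖β E - ∑ i, c i * (α (E ∩ Es i) : ℂ)‖ ≤ ε := by
  classical
  obtain ⟨M, hβM⟩ := hβbdd
  have hempty : (∅ : Set T) ∈ R := ring_empty hne hdiff
  -- real and imaginary parts
  set γ₁ : Set T → ℝ := fun E => (β E).re with hγ₁_def
  set γ₂ : Set T → ℝ := fun E => (β E).im with hγ₂_def
  have hγ₁add : ∀ E ∈ R, ∀ F ∈ R, Disjoint E F → γ₁ (E ∪ F) = γ₁ E + γ₁ F := by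
    intro E hE F hF hd; simp only [hγ₁_def]; rw [hβadd E hE F hF hd]; simp
  have hγ₂add : ∀ E ∈ R, ∀ F ∈ R, Disjoint E F → γ₂ (E ∪ F) = γ₂ E + γ₂ F := by
    intro E hE F hF hd; simp only [hγ₂_def]; rw [hβadd E hE F hF hd]; simp
  have hγ₁M : ∀ E ∈ R, |γ₁ E| ≤ M :=
    fun E hE => le_trans (Complex.abs_re_le_norm _) (hβM E hE)
  have hγ₂M : ∀ E ∈ R, |γ₂ E| ≤ M :=
    fun E hE => le_trans (Complex.abs_im_le_norm _) (hβM E hE)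
  have hacγ₁ : ∀ ε : ℝ, 0 < ε → ∃ δ : ℝ, 0 < δ ∧ ∀ S ∈ R, α S < δ → |γ₁ S| < ε := by
    intro ε' hε'
    obtain ⟨δ, hδ, hδp⟩ := hac ε' hε'
    exact ⟨δ, hδ, fun S hS hSδ => lt_of_le_of_lt
      (le_trans (Complex.abs_re_le_norm _)
        (norm_le_tv hne hunion hdiff β hβadd M hβM hS)) (hδp S hS hSδ)⟩
  have hacγ₂ : ∀ ε : ℝ, 0 < ε → ∃ δ : ℝ, 0 < δ ∧ ∀ S ∈ R, α S < δ → |γ₂ S| < ε := by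
    intro ε' hε'
    obtain ⟨δ, hδ, hδp⟩ := hac ε' hε'
    exact ⟨δ, hδ, fun S hS hSδ => lt_of_le_of_lt
      (le_trans (Complex.abs_im_le_norm _)
        (norm_le_tv hne hunion hdiff β hβadd M hβM hS)) (hδp S hS hSδ)⟩
  -- localization: find F carrying almost all the variation
  set V : Set ℝ := {x : ℝ | ∃ (k : ℕ) (Es : Fin k → Set T),
    (∀ i, Es i ∈ R) ∧ Pairwise (Function.onFun Disjoint Es) ∧
    x = ∑ i, ‖β (Es i)‖} with hV_def
  have hVne : V.Nonempty :=
    ⟨0, 0, Fin.elim0, fun i => i.elim0, fun i => i.elim0, by simp⟩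
  have hVbdd : BddAbove V := by
    refine ⟨4 * M, ?_⟩
    rintro x ⟨k, Es, h1, h2, rfl⟩
    exact sum_norm_le hne hunion hdiff β hβadd M hβM k Es h1 h2
  obtain ⟨x, ⟨k₀, G, hG, hGdisj, rfl⟩, hx⟩ :=
    exists_lt_of_lt_csSup hVne (show sSup V - ε/3 < sSup V by linarith)
  set F : Set T := ⋃ i ∈ Finset.univ, G i with hF_def
  have hFR : F ∈ R := mem_finset_union hne hunion hdiff Finset.univ G (fun i _ => hG i)
  have hGF : ∀ i, G i ⊆ F := fun i x hx =>
    Set.mem_biUnion (Finset.mem_univ i) hx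
  -- β is small outside F
  have hsmall : ∀ E ∈ R, ‖β (E \ F)‖ ≤ ε/3 := by
    intro E hE
    set E' := E \ F with hE'_def
    have hE'R : E' ∈ R := hdiff E hE F hFR
    have hE'd : ∀ i, Disjoint E' (G i) := fun i =>
      Set.disjoint_of_subset_right (hGF i) Set.disjoint_sdiff_left
    have hmem : ‖β E'‖ + ∑ i, ‖β (G i)‖ ∈ V := by
      refine ⟨k₀ + 1, Fin.cons (α := fun _ => Set T) E' G, ?_, ?_, ?_⟩
      · intro i
        induction i using Fin.cases with
        | zero => simpa using hE'R
        | succ i => simpa using hG i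
      · exact pairwise_cons_disjoint hGdisj E' hE'd
      · rw [Fin.sum_univ_succ]; simp
    have := le_csSup hVbdd hmem
    linarith
  -- approximate real and imaginary parts on F
  obtain ⟨k₁, c₁, A₁, hA₁, happrox₁⟩ :=
    real_approx hne hunion hdiff α hα0 hαadd γ₁ hγ₁add M hγ₁M hacγ₁ hFR (ε/3)
      (by linarith)
  obtain ⟨k₂, c₂, A₂, hA₂, happrox₂⟩ :=
    real_approx hne hunion hdiff α hα0 hαadd γ₂ hγ₂add M hγ₂M hacγ₂ hFR (ε/3)
      (by linarith)
  refine ⟨k₁ + k₂,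
    Fin.append (fun i => ((c₁ i : ℝ) : ℂ)) (fun i => (c₂ i : ℂ) * Complex.I),
    Fin.append A₁ A₂, ?_, ?_⟩
  · intro i
    induction i using Fin.addCases with
    | left i => simpa [Fin.append_left] using (hA₁ i).1
    | right i => simpa [Fin.append_right] using (hA₂ i).1
  intro E hE
  have hEFR : E ∩ F ∈ R := ring_inter hdiff hE hFR
  have hEFsub : E ∩ F ⊆ F := Set.inter_subset_right
  have h₁ := happrox₁ (E ∩ F) hEFR hEFsub
  have h₂ := happrox₂ (E ∩ F) hEFR hEFsub
  -- the sum splits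
  have hsplit : ∑ i : Fin (k₁ + k₂),
      Fin.append (fun i => ((c₁ i : ℝ) : ℂ)) (fun i => (c₂ i : ℂ) * Complex.I) i *
        (α (E ∩ Fin.append A₁ A₂ i) : ℂ)
      = ((∑ i, c₁ i * α ((E ∩ F) ∩ A₁ i) : ℝ) : ℂ)
        + ((∑ i, c₂ i * α ((E ∩ F) ∩ A₂ i) : ℝ) : ℂ) * Complex.I := by
    rw [Fin.sum_univ_add]
    have e₁ : ∀ i : Fin k₁, E ∩ A₁ i = (E ∩ F) ∩ A₁ i := by
      intro i
      exact Set.ext fun x => ⟨fun ⟨hxE, hxA⟩ => ⟨⟨hxE, (hA₁ i).2 hxA⟩, hxA⟩,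
        fun ⟨⟨hxE, _⟩, hxA⟩ => ⟨hxE, hxA⟩⟩
    have e₂ : ∀ i : Fin k₂, E ∩ A₂ i = (E ∩ F) ∩ A₂ i := by
      intro i
      exact Set.ext fun x => ⟨fun ⟨hxE, hxA⟩ => ⟨⟨hxE, (hA₂ i).2 hxA⟩, hxA⟩,
        fun ⟨⟨hxE, _⟩, hxA⟩ => ⟨hxE, hxA⟩⟩
    congr 1
    · push_cast
      refine Finset.sum_congr rfl fun i _ => ?_
      rw [Fin.append_left, Fin.append_left, e₁ i]
    · rw [Complex.ofReal_sum, Finset.sum_mul]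
      refine Finset.sum_congr rfl fun i _ => ?_
      rw [Fin.append_right, Fin.append_right, e₂ i]
      push_cast; ring
  rw [hsplit]
  -- decompose β E
  have hβsplit : β E = β (E \ F) + β (E ∩ F) := add_split hdiff β hβadd hE hFR
  set x₁ : ℝ := ∑ i, c₁ i * α ((E ∩ F) ∩ A₁ i) with hx₁_def
  set x₂ : ℝ := ∑ i, c₂ i * α ((E ∩ F) ∩ A₂ i) with hx₂_def
  have hz : β (E ∩ F) - ((x₁ : ℂ) + (x₂ : ℂ) * Complex.I)
      = Complex.mk (γ₁ (E ∩ F) - x₁) (γ₂ (E ∩ F) - x₂) := by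
    apply Complex.ext <;> simp [hγ₁_def, hγ₂_def, Complex.ext_iff]
  have hznorm : ‖β (E ∩ F) - ((x₁ : ℂ) + (x₂ : ℂ) * Complex.I)‖
      ≤ |γ₁ (E ∩ F) - x₁| + |γ₂ (E ∩ F) - x₂| := by
    rw [hz]
    exact Complex.norm_le_abs_re_add_abs_im _
  calc ‖β E - ((x₁ : ℂ) + (x₂ : ℂ) * Complex.I)‖
      = ‖β (E \ F) + (β (E ∩ F) - ((x₁ : ℂ) + (x₂ : ℂ) * Complex.I))‖ := by
        rw [hβsplit]; ring_nf
    _ ≤ ‖β (E \ F)‖ + ‖β (E ∩ F) - ((x₁ : ℂ) + (x₂ : ℂ) * Complex.I)‖ := norm_add_le _ _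
    _ ≤ ε/3 + (ε/3 + ε/3) := by
        refine add_le_add (hsmall E hE) (le_trans hznorm (add_le_add ?_ ?_))
        · exact h₁
        · exact h₂
    _ ≤ ε := by linarith
end Aux

/-- **Theorem (Radon–Nikodym–Darst, pointwise part).** Let `α` be a nonnegative finitely
additive set function and `β` a bounded complex-valued finitely additive set function on a
ring of sets `R`, with `β` absolutely continuous with respect to `α`. Then there is a
sequence of `R`-simple functions `φ_n = ∑ i, c n i • χ_{Es n i}` such that
`β E = lim_n ∫_E φ_n dα = lim_n ∑ i, c n i * α (E ∩ Es n i)` for every `E ∈ R`. -/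
theorem radon_nikodym_darst_pointwise
    {T : Type*} (R : Set (Set T))
    (hne : R.Nonempty)
    (hunion : ∀ E ∈ R, ∀ F ∈ R, E ∪ F ∈ R)
    (hdiff : ∀ E ∈ R, ∀ F ∈ R, E \ F ∈ R)
    (α : Set T → ℝ) (β : Set T → ℂ)
    (hα0 : ∀ E ∈ R, 0 ≤ α E)
    (hαadd : ∀ E ∈ R, ∀ F ∈ R, Disjoint E F → α (E ∪ F) = α E + α F)
    (hβadd : ∀ E ∈ R, ∀ F ∈ R, Disjoint E F → β (E ∪ F) = β E + β F)
    (hβbdd : ∃ M : ℝ, ∀ E ∈ R, ‖β E‖ ≤ M)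
    (hac : ∀ ε : ℝ, 0 < ε → ∃ δ : ℝ, 0 < δ ∧
      ∀ E ∈ R, α E < δ → totalVariation R β E < ε) :
    ∃ (k : ℕ → ℕ) (c : (n : ℕ) → Fin (k n) → ℂ) (Es : (n : ℕ) → Fin (k n) → Set T),
      (∀ (n : ℕ) (i : Fin (k n)), Es n i ∈ R) ∧
      ∀ E ∈ R, Tendsto (fun n => ∑ i, c n i * (α (E ∩ Es n i) : ℂ)) atTop (𝓝 (β E)) := by
  have key : ∀ n : ℕ, ∃ (k : ℕ) (c : Fin k → ℂ) (Es : Fin k → Set T),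
      (∀ i, Es i ∈ R) ∧
      ∀ E ∈ R, ‖β E - ∑ i, c i * (α (E ∩ Es i) : ℂ)‖ ≤ 1/((n:ℝ)+1) :=
    fun n => complex_approx hne hunion hdiff α β hα0 hαadd hβadd hβbdd hac
      (1/((n:ℝ)+1)) (by positivity)
  choose k c Es hmem hbound using key
  refine ⟨k, c, Es, hmem, ?_⟩
  intro E hE
  rw [tendsto_iff_norm_sub_tendsto_zero]
  apply squeeze_zero (fun n => norm_nonneg _) (fun n => ?_)
    tendsto_one_div_add_atTop_nhds_zero_nat
  rw [norm_sub_rev]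
  exact hbound n E hE
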